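/- Let ι be a finite nonempty type, z : ι → ℝ^d a family of points, p : ι → ℝ with p(i) > 0 for all i and ∑_i p(i) = 1, and t > 0. Define the posterior weights w_i(y) := p(i) exp(−‖y − z(i)‖²/(2t)) / ∑_j p(j) exp(−‖y − z(j)‖²/(2t)) and the posterior mean m(y) := ∑_i w_i(y) · z(i). Then m : ℝ^d → ℝ^d is differentiable at every y ∈ ℝ^d, and its Fréchet derivative satisfies, for every direction v ∈ ℝ^d, (Dm(y))(v) = (1/t) · ∑_i w_i(y) · ⟨ z(i) − m(y), v ⟩ · ( z(i) − m(y) ), i.e. the Jacobian of m at y equals 1/t times the covariance matrix of the discrete distribution that puts mass w_i(y) at z(i). -/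

import Mathlib

open MeasureTheory

/-- The posterior mean `m(y) = ∑_i w_i(y) z(i)` of a finite Gaussian mixture
posterior is differentiable, and its Jacobian equals `1/t` times the posterior covariance:
`(Dm(y))(v) = (1/t) ∑_i w_i(y) ⟨z(i) − m(y), v⟩ (z(i) − m(y))`. -/
theorem posterior_mean_fderiv_eq_cov
    {ι : Type*} [Fintype ι] [Nonempty ι] {d : ℕ}
    (z : ι → EuclideanSpace ℝ (Fin d)) (p : ι → ℝ)
    (hp : ∀ i, 0 < p i) (hp1 : ∑ i, p i = 1)
    (t : ℝ) (ht : 0 < t)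
    (w : ι → EuclideanSpace ℝ (Fin d) → ℝ)
    (hw : ∀ i y, w i y =
      p i * Real.exp (-‖y - z i‖ ^ 2 / (2 * t)) /
        ∑ j, p j * Real.exp (-‖y - z j‖ ^ 2 / (2 * t)))
    (m : EuclideanSpace ℝ (Fin d) → EuclideanSpace ℝ (Fin d))
    (hm : ∀ y, m y = ∑ i, w i y • z i) :
    ∀ y, DifferentiableAt ℝ m y ∧
      ∀ v, fderiv ℝ m y v
        = (1 / t) • ∑ i, (w i y * (inner ℝ (z i - m y) v : ℝ)) • (z i - m y) := by
  intro y
  classical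
  have ht' : t ≠ 0 := ne_of_gt ht
  set g : ι → EuclideanSpace ℝ (Fin d) → ℝ :=
    fun i x => p i * Real.exp (-‖x - z i‖ ^ 2 / (2 * t)) with hgdef
  set S : EuclideanSpace ℝ (Fin d) → ℝ := fun x => ∑ j, g j x with hSdef
  have hSpos : ∀ x, 0 < S x := fun x =>
    Finset.sum_pos (fun i _ => mul_pos (hp i) (Real.exp_pos _)) Finset.univ_nonempty
  have hw' : ∀ i x, w i x = g i x / S x := fun i x => hw i x
  have hwS : ∀ i, g i y = w i y * S y := by
    intro i
    rw [hw' i y, div_mul_cancel₀ _ (hSpos y).ne']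
  -- derivative of g i
  have hgder : ∀ i, HasFDerivAt (g i)
      ((g i y * (-t⁻¹)) • (innerSL ℝ (y - z i) : EuclideanSpace ℝ (Fin d) →L[ℝ] ℝ)) y := by
    intro i
    have h1 : HasFDerivAt (fun x : EuclideanSpace ℝ (Fin d) => x - z i)
        (ContinuousLinearMap.id ℝ _) y := (hasFDerivAt_id y).sub_const (z i)
    have h2 := h1.inner ℝ h1
    have h2' : HasFDerivAt (fun x : EuclideanSpace ℝ (Fin d) => ‖x - z i‖ ^ 2)
        ((2 : ℝ) • (innerSL ℝ (y - z i) : EuclideanSpace ℝ (Fin d) →L[ℝ] ℝ)) y := by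
      have hfun : (fun x : EuclideanSpace ℝ (Fin d) => ‖x - z i‖ ^ 2)
          = fun x : EuclideanSpace ℝ (Fin d) => (inner ℝ (x - z i) (x - z i) : ℝ) := by
        funext x; rw [real_inner_self_eq_norm_sq]
      rw [hfun]
      refine h2.congr_fderiv ?_
      ext v
      simp [fderivInnerCLM, real_inner_comm, two_smul]
      rw [real_inner_comm (y - z i) v, inner_sub_left, real_inner_comm (z i) v]
    have h3 : HasFDerivAt (fun x : EuclideanSpace ℝ (Fin d) => -‖x - z i‖ ^ 2 / (2 * t))
        ((-t⁻¹ / 2) • ((2 : ℝ) • (innerSL ℝ (y - z i) : EuclideanSpace ℝ (Fin d) →L[ℝ] ℝ))) y := by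
      have := h2'.const_mul (-t⁻¹ / 2)
      have hfun : (fun x : EuclideanSpace ℝ (Fin d) => -‖x - z i‖ ^ 2 / (2 * t))
          = fun x : EuclideanSpace ℝ (Fin d) => (-t⁻¹ / 2) * ‖x - z i‖ ^ 2 := by
        funext x; rw [div_eq_mul_inv, mul_inv]; ring
      rw [hfun]; exact this
    have h4 := (h3.exp).const_mul (p i)
    refine h4.congr_fderiv ?_
    ext v
    simp only [hgdef, ContinuousLinearMap.smul_apply, innerSL_apply_apply, smul_eq_mul]
    ring
  set G : ι → EuclideanSpace ℝ (Fin d) →L[ℝ] ℝ :=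
    fun i => (g i y * (-t⁻¹)) • (innerSL ℝ (y - z i)) with hGdef
  have hSder : HasFDerivAt S (∑ i, G i) y := HasFDerivAt.fun_sum (fun i _ => hgder i)
  set n : EuclideanSpace ℝ (Fin d) → EuclideanSpace ℝ (Fin d) :=
    fun x => ∑ i, g i x • z i with hndef
  have hnder : HasFDerivAt n (∑ i, (G i).smulRight (z i)) y :=
    HasFDerivAt.fun_sum (fun i _ => (hgder i).smul_const (z i))
  have hSinv : HasFDerivAt (fun x => (S x)⁻¹) ((-(S y ^ 2)⁻¹) • (∑ i, G i)) y := by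
    have := (hasDerivAt_inv (hSpos y).ne').comp_hasFDerivAt y hSder
    exact this
  have hD : HasFDerivAt (fun x => (S x)⁻¹ • n x)
      ((S y)⁻¹ • (∑ i, (G i).smulRight (z i)) +
        ((-(S y ^ 2)⁻¹) • (∑ i, G i)).smulRight (n y)) y := hSinv.smul hnder
  have hmeq : m = fun x => (S x)⁻¹ • n x := by
    funext x
    rw [hm, hndef]
    simp only [Finset.smul_sum]
    refine Finset.sum_congr rfl fun i _ => ?_
    rw [hw' i x, div_eq_inv_mul, smul_smul]
  have hDm : HasFDerivAt m ((S y)⁻¹ • (∑ i, (G i).smulRight (z i)) +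
        ((-(S y ^ 2)⁻¹) • (∑ i, G i)).smulRight (n y)) y := by
    rw [hmeq]; exact hD
  refine ⟨hDm.differentiableAt, fun v => ?_⟩
  rw [hDm.fderiv]
  -- auxiliary identities
  have hny : n y = S y • m y := by
    rw [hmeq]
    simp only
    rw [smul_smul, mul_inv_cancel₀ (hSpos y).ne', one_smul]
  have hnyv : (inner ℝ (n y) v : ℝ) = S y * (inner ℝ (m y) v : ℝ) := by
    rw [hny, real_inner_smul_left]
  have hnyv' : ∑ i, g i y * (inner ℝ (z i) v : ℝ) = S y * (inner ℝ (m y) v : ℝ) := by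
    rw [← hnyv, hndef]
    simp only [sum_inner, real_inner_smul_left]
  -- value of the sum of G i at v
  have hSy : (∑ i : ι, g i y) = S y := rfl
  have hT : ∑ i, (G i) v = -(S y * t⁻¹) * ((inner ℝ y v : ℝ) - (inner ℝ (m y) v : ℝ)) := by
    simp only [hGdef, ContinuousLinearMap.smul_apply,
      innerSL_apply_apply, smul_eq_mul, inner_sub_left]
    rw [Finset.sum_congr rfl (fun i _ => by ring :
      ∀ i ∈ Finset.univ, g i y * -t⁻¹ * ((inner ℝ y v : ℝ) - (inner ℝ (z i) v : ℝ))
        = -t⁻¹ * (g i y * (inner ℝ y v : ℝ)) - -t⁻¹ * (g i y * (inner ℝ (z i) v : ℝ)))]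
    rw [Finset.sum_sub_distrib, ← Finset.mul_sum, ← Finset.mul_sum, ← Finset.sum_mul, hnyv']
    rw [hSy]
    ring
  -- sum of weights is 1
  have hwsum : ∑ i, w i y = 1 := by
    simp only [hw' _ y]
    rw [← Finset.sum_div, hSy, div_self (hSpos y).ne']
  -- coefficient sum is zero
  have hsum0 : ∑ i, w i y * (inner ℝ (z i - m y) v : ℝ) = 0 := by
    simp only [inner_sub_left, mul_sub]
    rw [Finset.sum_sub_distrib, ← Finset.sum_mul]
    have : ∑ i, w i y * (inner ℝ (z i) v : ℝ) = (inner ℝ (m y) v : ℝ) := by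
      rw [hm y, sum_inner]
      exact Finset.sum_congr rfl fun i _ => (real_inner_smul_left _ _ _).symm
    rw [this, hwsum, one_mul, sub_self]
  -- rewrite RHS
  have hRHS : (1 / t) • ∑ i, (w i y * (inner ℝ (z i - m y) v : ℝ)) • (z i - m y)
      = ∑ i, ((1 / t) * (w i y * (inner ℝ (z i - m y) v : ℝ))) • z i := by
    rw [Finset.smul_sum]
    simp only [smul_sub, Finset.sum_sub_distrib, smul_smul]
    rw [← Finset.sum_smul]
    have h0 : ∑ i, 1 / t * (w i y * (inner ℝ (z i - m y) v : ℝ)) = 0 := by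
      rw [← Finset.mul_sum, hsum0, mul_zero]
    rw [h0, zero_smul, sub_zero]
  rw [hRHS]
  simp only [ContinuousLinearMap.add_apply, ContinuousLinearMap.smul_apply,
    ContinuousLinearMap.sum_apply, ContinuousLinearMap.smulRight_apply]
  simp only [inner_sub_left]
  rw [hT, hny]
  set M : ℝ := (inner ℝ (m y) v : ℝ) with hM
  set Y : ℝ := (inner ℝ y v : ℝ) with hY
  rw [hm y]
  simp only [smul_eq_mul, Finset.smul_sum, smul_smul]
  rw [← Finset.sum_add_distrib]
  refine Finset.sum_congr rfl fun i _ => ?_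
  simp only [hGdef, ContinuousLinearMap.smul_apply, innerSL_apply_apply, smul_eq_mul, smul_smul,
    inner_sub_left]
  rw [← add_smul]
  congr 1
  rw [hwS i]
  have hS' : S y ≠ 0 := (hSpos y).ne'
  field_simp
  rw [hY, hM]
  simp only [PiLp.inner_apply, RCLike.inner_apply, conj_trivial]
  ring
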